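/- Resonant growth in the first-order slow-time expansion: with the notation below, the functions Ω₁₁(τ) = c e^{−ν₀τ} + ν₀ ε₀ τ e^{−ν₀τ} ( 2a + 10|b|² a / D ) and Ω₃₁(τ) = d e^{−ν₀τ} − ν₀ ε₀ τ e^{−ν₀τ} (10 |a|² b / D) are, for any c, d ∈ ℂ, solutions of the linear forced ODEs Ω₁₁' = −ν₀ Ω₁₁ + (1/2)(Ω₃₀ Ω₇₁ − conj(Ω₃₀) Ω₅₁) + 2ν₀ ε₀ Ω₁₀ and Ω₃₁' = −ν₀ Ω₃₁ + (1/2)(conj(Ω₁₀) Ω₅₁ − Ω₁₀ conj(Ω₇₁)) with Ω₁₁(0) = c and Ω₃₁(0) = d. -/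

import Mathlib

/-- Resonant growth in the first-order slow-time expansion. With
Ω₁₀(τ) = a e^{−ν₀τ}, Ω₃₀(τ) = b e^{−ν₀τ}, D = |a|² + |b|²,
Ω₅₁ = −10ν₀ε₀ab/D and Ω₇₁ = 10ν₀ε₀a·conj(b)/D, the functions
Ω₁₁(τ) = c e^{−ν₀τ} + ν₀ε₀τe^{−ν₀τ}(2a + 10|b|²a/D) and
Ω₃₁(τ) = d e^{−ν₀τ} − ν₀ε₀τe^{−ν₀τ}(10|a|²b/D) solve, for any c, d ∈ ℂ, the forced ODEs
Ω₁₁' = −ν₀Ω₁₁ + (1/2)(Ω₃₀Ω₇₁ − conj(Ω₃₀)Ω₅₁) + 2ν₀ε₀Ω₁₀ and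
Ω₃₁' = −ν₀Ω₃₁ + (1/2)(conj(Ω₁₀)Ω₅₁ − Ω₁₀conj(Ω₇₁)), with Ω₁₁(0) = c and Ω₃₁(0) = d. -/
theorem resonant_growth_expansion
    (ν0 ε0 : ℝ) (hν0 : 0 < ν0) (hε0 : ε0 = 1 ∨ ε0 = -1)
    (a b : ℂ) (hab : ¬(a = 0 ∧ b = 0)) (c d : ℂ) :
    let D : ℝ := ‖a‖ ^ 2 + ‖b‖ ^ 2
    let Ω10 : ℝ → ℂ := fun τ => a * Complex.exp (-(ν0 : ℂ) * (τ : ℂ))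
    let Ω30 : ℝ → ℂ := fun τ => b * Complex.exp (-(ν0 : ℂ) * (τ : ℂ))
    let Ω51 : ℂ := -10 * (ν0 : ℂ) * (ε0 : ℂ) * a * b / (D : ℂ)
    let Ω71 : ℂ := 10 * (ν0 : ℂ) * (ε0 : ℂ) * a * (starRingEnd ℂ) b / (D : ℂ)
    let Ω11 : ℝ → ℂ := fun τ =>
      c * Complex.exp (-(ν0 : ℂ) * (τ : ℂ))
        + (ν0 : ℂ) * (ε0 : ℂ) * (τ : ℂ) * Complex.exp (-(ν0 : ℂ) * (τ : ℂ))
            * (2 * a + 10 * ((‖b‖ ^ 2 : ℝ) : ℂ) * a / (D : ℂ))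
    let Ω31 : ℝ → ℂ := fun τ =>
      d * Complex.exp (-(ν0 : ℂ) * (τ : ℂ))
        - (ν0 : ℂ) * (ε0 : ℂ) * (τ : ℂ) * Complex.exp (-(ν0 : ℂ) * (τ : ℂ))
            * (10 * ((‖a‖ ^ 2 : ℝ) : ℂ) * b / (D : ℂ))
    (∀ τ : ℝ, HasDerivAt Ω11
        (-(ν0 : ℂ) * Ω11 τ
          + (1 / 2 : ℂ) * (Ω30 τ * Ω71 - (starRingEnd ℂ) (Ω30 τ) * Ω51)
          + 2 * (ν0 : ℂ) * (ε0 : ℂ) * Ω10 τ) τ)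
      ∧ (∀ τ : ℝ, HasDerivAt Ω31
          (-(ν0 : ℂ) * Ω31 τ
            + (1 / 2 : ℂ) * ((starRingEnd ℂ) (Ω10 τ) * Ω51 - Ω10 τ * (starRingEnd ℂ) Ω71)) τ)
      ∧ Ω11 0 = c ∧ Ω31 0 = d := by
  intro D Ω10 Ω30 Ω51 Ω71 Ω11 Ω31
  have hD : ((D : ℝ) : ℂ) ≠ 0 := by
    have : (0:ℝ) < D := by
      rcases (not_and_or.mp hab) with h | h
      · have := norm_pos_iff.mpr h
        positivity
      · have := norm_pos_iff.mpr h
        positivity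
    exact_mod_cast ne_of_gt this
  have hE : ∀ τ : ℝ, HasDerivAt (fun τ : ℝ => Complex.exp (-(ν0 : ℂ) * (τ : ℂ)))
      (Complex.exp (-(ν0 : ℂ) * (τ : ℂ)) * (-(ν0 : ℂ) * 1)) τ := fun τ => by
    have h1 : HasDerivAt (fun τ : ℝ => ((τ : ℂ))) 1 τ := by
      exact (hasDerivAt_id τ).ofReal_comp
    exact (h1.const_mul (-(ν0 : ℂ))).cexp
  have hτ : ∀ τ : ℝ, HasDerivAt (fun τ : ℝ => ((τ : ℂ))) 1 τ := fun τ => by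
    exact (hasDerivAt_id τ).ofReal_comp
  have hconj : ∀ τ : ℝ, (starRingEnd ℂ) (Complex.exp (-(ν0 : ℂ) * (τ : ℂ)))
      = Complex.exp (-(ν0 : ℂ) * (τ : ℂ)) := fun τ => by
    rw [← Complex.exp_conj]; congr 1
    simp [map_mul, Complex.conj_ofReal]
  have hb2 : b * (starRingEnd ℂ) b = ((‖b‖ ^ 2 : ℝ) : ℂ) := by
    rw [Complex.mul_conj]; norm_cast; rw [Complex.sq_norm]
  have ha2 : a * (starRingEnd ℂ) a = ((‖a‖ ^ 2 : ℝ) : ℂ) := by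
    rw [Complex.mul_conj]; norm_cast; rw [Complex.sq_norm]
  refine ⟨fun τ => ?_, fun τ => ?_, by simp [Ω11], by simp [Ω31]⟩
  · have key := (((hE τ).const_mul c).add
      ((((hτ τ).mul (hE τ)).const_mul ((ν0 : ℂ) * (ε0 : ℂ))).mul_const
        (2 * a + 10 * ((‖b‖ ^ 2 : ℝ) : ℂ) * a / (D : ℂ))))
    convert key using 1
    · rfl
    · funext x; simp only [Ω11, Ω31, Pi.add_apply, Pi.sub_apply, Pi.mul_apply]; ring
    · simp only [Ω11, Ω30, Ω71, Ω51, Ω10, hconj, map_mul]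
      rw [← hb2]
      field_simp
      ring
  · have key := (((hE τ).const_mul d).sub
      ((((hτ τ).mul (hE τ)).const_mul ((ν0 : ℂ) * (ε0 : ℂ))).mul_const
        (10 * ((‖a‖ ^ 2 : ℝ) : ℂ) * b / (D : ℂ))))
    convert key using 1
    · rfl
    · funext x; simp only [Ω11, Ω31, Pi.add_apply, Pi.sub_apply, Pi.mul_apply]; ring
    · simp only [Ω31, Ω10, Ω71, Ω51, hconj, map_mul, map_div₀, map_ofNat,
        Complex.conj_ofReal, Complex.conj_conj]
      rw [← ha2]
      field_simp
      ring
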